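/- Let p be an odd prime, k ∈ F_p with k ≠ 0, let f be a monic irreducible polynomial of degree n ≥ 1 over F_p, and let β ∈ F_{p^n} be a root of f. Then f^{Q_k} is irreducible over F_p (of degree 2n) if and only if there is no γ ∈ F_{p^n} with γ ≠ 0 and k·(γ + γ⁻¹) = β. -/

import Mathlib

open Polynomial

/-- The `Q_k`-transform of a polynomial `f` of degree `n` with coefficients
`f_0, …, f_n`: `f^{Q_k}(x) = k^{-n} · Σ_{j=0}^{n} f_j k^j (x²+1)^j x^{n-j}`,
which equals `(x/k)^n · f(k·(x + x⁻¹))` for all `x ≠ 0`. -/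
noncomputable def Qtransform {F : Type*} [Field F] (k : F) (f : Polynomial F) :
    Polynomial F :=
  Polynomial.C (k⁻¹ ^ f.natDegree) *
    ∑ j ∈ Finset.range (f.natDegree + 1),
      Polynomial.C (f.coeff j * k ^ j) * (Polynomial.X ^ 2 + 1) ^ j *
        Polynomial.X ^ (f.natDegree - j)

lemma Qtransform_monic {F : Type*} [Field F] {k : F} (hk : k ≠ 0) {f : Polynomial F}
    (hf : f.Monic) : (Qtransform k f).Monic ∧
      (Qtransform k f).natDegree = 2 * f.natDegree := by
  set n := f.natDegree with hn
  have h1 : ((X:F[X]) ^ 2 + 1).natDegree = 2 := by compute_degree!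
  have hm : ((X:F[X]) ^ 2 + 1).Monic := by
    have := Polynomial.monic_X_pow_add (p := (1:F[X])) (n := 2) (by
      simpa using Polynomial.degree_one_le.trans (by norm_num))
    exact this
  set S := ∑ j ∈ Finset.range (n + 1),
      Polynomial.C (f.coeff j * k ^ j) * (Polynomial.X ^ 2 + 1) ^ j *
        Polynomial.X ^ (n - j) with hS
  have hterm : ∀ j ∈ Finset.range (n+1),
      (Polynomial.C (f.coeff j * k ^ j) * ((X:F[X]) ^ 2 + 1) ^ j *
        Polynomial.X ^ (n - j)).natDegree ≤ n + j := by
    intro j hj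
    have hjn : j ≤ n := Finset.mem_range_succ_iff.mp hj
    refine le_trans (natDegree_mul_le) ?_
    calc _ ≤ (Polynomial.C (f.coeff j * k ^ j) * ((X:F[X]) ^ 2 + 1) ^ j).natDegree + (n - j) := by
            gcongr; exact natDegree_X_pow_le _
      _ ≤ (0 + 2*j) + (n-j) := by
            gcongr
            refine le_trans natDegree_mul_le ?_
            gcongr
            · exact natDegree_C _ |>.le
            · refine le_trans (natDegree_pow_le) ?_
              rw [h1]; omega
      _ ≤ n + j := by omega
  have hSdeg : S.natDegree ≤ 2*n :=
    natDegree_sum_le_of_forall_le _ _ (fun j hj => le_trans (hterm j hj)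
      (by have := Finset.mem_range_succ_iff.mp hj; omega))
  have hScoeff : S.coeff (2*n) = k ^ n := by
    rw [hS, finset_sum_coeff, Finset.sum_eq_single n]
    · have hc1 : (((X:F[X]) ^ 2 + 1) ^ n).coeff (2*n) = 1 := by
        have hmn : (((X:F[X]) ^ 2 + 1) ^ n).Monic := hm.pow n
        have : (((X:F[X]) ^ 2 + 1) ^ n).natDegree = 2*n := by
          rw [natDegree_pow, h1]; ring
        rw [← this]
        exact hmn.coeff_natDegree
      simp only [hf.coeff_natDegree, ← hn, one_mul, Nat.sub_self, pow_zero, mul_one]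
      rw [coeff_C_mul, hc1, mul_one]
      rw [hn, hf.coeff_natDegree, one_mul]
    · intro j hj hjn
      have hjn' : j ≤ n := Finset.mem_range_succ_iff.mp hj
      apply coeff_eq_zero_of_natDegree_lt
      exact lt_of_le_of_lt (hterm j hj) (by omega)
    · intro h; exact absurd (Finset.self_mem_range_succ n) h
  have hQdeg : (Qtransform k f).natDegree ≤ 2*n := by
    rw [Qtransform]
    exact le_trans (natDegree_C_mul_le _ _) hSdeg
  have hQcoeff : (Qtransform k f).coeff (2*n) = 1 := by
    rw [Qtransform, coeff_C_mul, hScoeff, ← hn]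
    field_simp
    rw [one_div, inv_pow, inv_mul_cancel₀ (pow_ne_zero _ hk)]
  have hmonic : (Qtransform k f).Monic :=
    monic_of_natDegree_le_of_coeff_eq_one _ hQdeg hQcoeff
  refine ⟨hmonic, le_antisymm hQdeg (le_natDegree_of_ne_zero (by rw [hQcoeff]; exact one_ne_zero))⟩

lemma Qtransform_aeval {F E : Type*} [Field F] [Field E] [Algebra F E]
    {k : F} (hk : k ≠ 0) (f : Polynomial F) {γ : E} (hγ : γ ≠ 0) :
    Polynomial.aeval γ (Qtransform k f) =
      (algebraMap F E k)⁻¹ ^ f.natDegree * γ ^ f.natDegree *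
        Polynomial.aeval (algebraMap F E k * (γ + γ⁻¹)) f := by
  set n := f.natDegree with hn
  set k' := algebraMap F E k with hk'
  have hk'0 : k' ≠ 0 := by
    simpa [hk'] using (map_ne_zero_iff _ (algebraMap F E).injective).mpr hk
  rw [Qtransform, map_mul, aeval_C, map_sum]
  rw [Polynomial.aeval_eq_sum_range (p := f) (k' * (γ + γ⁻¹))]
  rw [Finset.mul_sum, Finset.mul_sum]
  rw [map_pow, map_inv₀, ← hk', ← hn]
  refine Finset.sum_congr rfl ?_
  intro j hj
  have hjn : j ≤ n := Finset.mem_range_succ_iff.mp hj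
  simp only [map_mul, aeval_C, map_pow, map_add, aeval_X, map_one, Algebra.smul_def, map_mul,
    ← hk']
  have key : (γ ^ 2 + 1) ^ j * γ ^ (n - j) = γ ^ n * (γ + γ⁻¹) ^ j := by
    have : γ ^ 2 + 1 = γ * (γ + γ⁻¹) := by
      field_simp
    rw [this, mul_pow]
    rw [mul_comm (γ ^ j) ((γ + γ⁻¹) ^ j), mul_assoc, ← pow_add, mul_comm]
    congr 2
    omega
  calc k'⁻¹ ^ n * (algebraMap F E (f.coeff j) * k' ^ j * (γ ^ 2 + 1) ^ j * γ ^ (n - j))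
      = k'⁻¹ ^ n * (algebraMap F E (f.coeff j) * k' ^ j * ((γ ^ 2 + 1) ^ j * γ ^ (n - j))) := by
        ring
    _ = k'⁻¹ ^ n * (algebraMap F E (f.coeff j) * k' ^ j * (γ ^ n * (γ + γ⁻¹) ^ j)) := by
        rw [key]
    _ = k'⁻¹ ^ n * γ ^ n * (algebraMap F E (f.coeff j) * (k' * (γ + γ⁻¹)) ^ j) := by
        rw [mul_pow]; ring

set_option maxHeartbeats 1000000 in
set_option synthInstance.maxHeartbeats 1000000 in
open IntermediateField in
theorem backward_dir (p n : ℕ) [Fact p.Prime]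
    (k : ZMod p) (hk : k ≠ 0)
    (f : Polynomial (ZMod p)) (hmonic : f.Monic) (hirr : Irreducible f)
    (hdeg : f.natDegree = n) (hn : 1 ≤ n)
    (β : GaloisField p n) (hβ : Polynomial.aeval β f = 0)
    (hne : ¬ ∃ γ : GaloisField p n, γ ≠ 0 ∧
        algebraMap (ZMod p) (GaloisField p n) k * (γ + γ⁻¹) = β) :
    Irreducible (Qtransform k f) := by
  classical
  have halg : Algebra.IsAlgebraic (ZMod p) (GaloisField p n) :=
    Algebra.IsAlgebraic.of_finite _ _
  let ι : GaloisField p n →ₐ[ZMod p] AlgebraicClosure (ZMod p) := IsAlgClosed.lift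
  set k' := algebraMap (ZMod p) (AlgebraicClosure (ZMod p)) k with hk'def
  have hk'0 : k' ≠ 0 :=
    (map_ne_zero_iff _ (algebraMap (ZMod p) (AlgebraicClosure (ZMod p))).injective).mpr hk
  set β' := ι β with hβ'def
  obtain ⟨γ, hγq⟩ := IsAlgClosed.exists_root
    (X ^ 2 - Polynomial.C (β'/k') * X + 1) (by
      have : (X ^ 2 - Polynomial.C (β'/k') * X + 1 :
          (AlgebraicClosure (ZMod p))[X]).degree = 2 := by
        compute_degree!
      rw [this]; norm_num)
  have hγeq : γ ^ 2 - (β'/k') * γ + 1 = 0 := by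
    simpa using hγq
  have hγ0 : γ ≠ 0 := by
    rintro rfl
    simp at hγeq
  have hβ'γ : k' * (γ + γ⁻¹) = β' := by
    have h2 : γ ^ 2 + 1 = β' / k' * γ := by linear_combination hγeq
    field_simp at h2 ⊢
    linear_combination h2
  have hfβ' : Polynomial.aeval β' f = 0 := by
    rw [hβ'def, Polynomial.aeval_algHom_apply, hβ, map_zero]
  have hrootQ : Polynomial.aeval γ (Qtransform k f) = 0 := by
    rw [Qtransform_aeval hk f hγ0, ← hk'def, hβ'γ, hfβ', mul_zero]
  have hQm := (Qtransform_monic hk hmonic).1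
  have hQd := (Qtransform_monic hk hmonic).2
  have hint : IsIntegral (ZMod p) γ :=
    (Algebra.IsAlgebraic.isAlgebraic (R := ZMod p) γ).isIntegral
  have hKfin : FiniteDimensional (ZMod p) (ZMod p)⟮γ⟯ := adjoin.finiteDimensional hint
  have hKrank : Module.finrank (ZMod p) (ZMod p)⟮γ⟯ = (minpoly (ZMod p) γ).natDegree :=
    adjoin.finrank hint
  have hγK : γ ∈ (ZMod p)⟮γ⟯ := mem_adjoin_simple_self _ γ
  have hβ'K : β' ∈ (ZMod p)⟮γ⟯ := by
    rw [← hβ'γ]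
    exact mul_mem (IntermediateField.algebraMap_mem _ k) (add_mem hγK (inv_mem hγK))
  set βK : (ZMod p)⟮γ⟯ := ⟨β', hβ'K⟩ with hβKdef
  have hβKeval : Polynomial.aeval βK f = 0 := by
    have h1 : algebraMap (ZMod p)⟮γ⟯ (AlgebraicClosure (ZMod p)) (Polynomial.aeval βK f) = 0 := by
      rw [← Polynomial.aeval_algebraMap_apply]
      exact hfβ'
    exact (map_eq_zero_iff _ (algebraMap _ _).injective).mp h1
  have hminβK : minpoly (ZMod p) βK = f :=
    (minpoly.eq_of_irreducible_of_monic hirr hβKeval hmonic).symm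
  have hβKint : IsIntegral (ZMod p) βK := IsIntegral.of_finite _ _
  have hK2rank : Module.finrank (ZMod p) ↥(IntermediateField.adjoin (ZMod p) {βK}) = n := by
    rw [adjoin.finrank hβKint, hminβK, hdeg]
  have hK2fin : FiniteDimensional (ZMod p) ↥(IntermediateField.adjoin (ZMod p) {βK}) := adjoin.finiteDimensional hβKint
  have hKK2fin : FiniteDimensional ↥(IntermediateField.adjoin (ZMod p) {βK}) (ZMod p)⟮γ⟯ :=
    FiniteDimensional.right (ZMod p) _ _
  have htower : n * Module.finrank ↥(IntermediateField.adjoin (ZMod p) {βK}) (ZMod p)⟮γ⟯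
      = (minpoly (ZMod p) γ).natDegree := by
    rw [← hKrank, ← hK2rank]
    exact Module.finrank_mul_finrank (ZMod p) ↥(IntermediateField.adjoin (ZMod p) {βK}) (ZMod p)⟮γ⟯
  have hdvd : minpoly (ZMod p) γ ∣ Qtransform k f := minpoly.dvd _ _ hrootQ
  have hdle : (minpoly (ZMod p) γ).natDegree ≤ 2 * n := by
    have := Polynomial.natDegree_le_of_dvd hdvd hQm.ne_zero
    rwa [hQd, hdeg] at this
  set m := Module.finrank ↥(IntermediateField.adjoin (ZMod p) {βK}) (ZMod p)⟮γ⟯ with hmdef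
  have hm1 : m ≠ 1 := by
    intro hm1
    have hKn : Module.finrank (ZMod p) (ZMod p)⟮γ⟯ = n := by
      rw [hKrank, ← htower, hm1, mul_one]
    have hβ'int : IsIntegral (ZMod p) β' := (Algebra.IsAlgebraic.isAlgebraic β').isIntegral
    have hminβ' : minpoly (ZMod p) β' = f :=
      (minpoly.eq_of_irreducible_of_monic hirr hfβ' hmonic).symm
    have hK1rank : Module.finrank (ZMod p) (ZMod p)⟮β'⟯ = n := by
      rw [adjoin.finrank hβ'int, hminβ', hdeg]
    have hK1le : (ZMod p)⟮β'⟯ ≤ (ZMod p)⟮γ⟯ := by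
      rw [adjoin_le_iff]
      simpa using hβ'K
    have hK1K : (ZMod p)⟮β'⟯ = (ZMod p)⟮γ⟯ :=
      eq_of_le_of_finrank_eq hK1le (by rw [hK1rank, hKn])
    have hγK1 : γ ∈ (ZMod p)⟮β'⟯ := hK1K ▸ hγK
    have hK1range : (ZMod p)⟮β'⟯ ≤ ι.fieldRange := by
      rw [adjoin_le_iff]
      simpa using ⟨β, rfl⟩
    obtain ⟨γ0, hγ0eq'⟩ := hK1range hγK1
    have hγ0eq : ι γ0 = γ := hγ0eq'
    apply hne
    refine ⟨γ0, ?_, ?_⟩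
    · rintro rfl
      rw [map_zero] at hγ0eq
      exact hγ0 hγ0eq.symm
    · apply ι.injective
      show ι (algebraMap (ZMod p) (GaloisField p n) k * (γ0 + γ0⁻¹)) = ι β
      rw [map_mul, map_add, map_inv₀, hγ0eq, ι.commutes, ← hk'def, hβ'γ]
  have hm2 : m = 2 := by
    have hm0 : 0 < m := Module.finrank_pos (R := ↥(IntermediateField.adjoin (ZMod p) {βK})) (M := ↥(ZMod p)⟮γ⟯)
    have hnm : n * m ≤ n * 2 := by
      rw [htower, Nat.mul_comm n 2]; exact hdle
    have hmle : m ≤ 2 := Nat.le_of_mul_le_mul_left hnm (by omega)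
    omega
  have hdeq : (minpoly (ZMod p) γ).natDegree = 2 * n := by
    rw [← htower, hm2, Nat.mul_comm]
  have hfinal : Qtransform k f = minpoly (ZMod p) γ := by
    apply Polynomial.eq_of_monic_of_dvd_of_natDegree_le (minpoly.monic hint) hQm hdvd
    rw [hQd, hdeg, hdeq]
  rw [hfinal]
  exact minpoly.irreducible hint


/-- Let `p` be an odd prime, `k ∈ F_p` nonzero, `f` a monic irreducible
polynomial of degree `n ≥ 1` over `F_p`, and `β ∈ F_{p^n}` a root of `f`.
Then `f^{Q_k}` is irreducible over `F_p` if and only if there is no nonzero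
`γ ∈ F_{p^n}` with `k·(γ + γ⁻¹) = β`. -/
theorem Qtransform_irreducible_iff (p n : ℕ) [Fact p.Prime]
    (hodd : Odd p) (k : ZMod p) (hk : k ≠ 0)
    (f : Polynomial (ZMod p)) (hmonic : f.Monic) (hirr : Irreducible f)
    (hdeg : f.natDegree = n) (hn : 1 ≤ n)
    (β : GaloisField p n) (hβ : Polynomial.aeval β f = 0) :
    Irreducible (Qtransform k f) ↔
      ¬ ∃ γ : GaloisField p n, γ ≠ 0 ∧
        algebraMap (ZMod p) (GaloisField p n) k * (γ + γ⁻¹) = β := by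
  constructor
  · intro hQ
    rintro ⟨γ, hγ0, hγ⟩
    have hroot : Polynomial.aeval γ (Qtransform k f) = 0 := by
      rw [Qtransform_aeval hk f hγ0, hγ, hβ, mul_zero]
    have hQm := (Qtransform_monic hk hmonic).1
    have hQd := (Qtransform_monic hk hmonic).2
    have heq := minpoly.eq_of_irreducible_of_monic hQ hroot hQm
    have hle := minpoly.natDegree_le (A := ZMod p) γ
    rw [← heq, hQd, hdeg, GaloisField.finrank p (by omega)] at hle
    omega
  · exact backward_dir p n k hk f hmonic hirr hdeg hn β hβ
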